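/- Let q be a prime power, N ≥ 3 an integer, A a finite cap in PG(N,q), and let Ω be the set of points u of PG(N,q) with u ∉ A such that no two distinct points of A are collinear with u. Let S ⊆ Ω be finite, p ∈ [0,1], and let B be a p-random subset of S. Define M(B) = {x ∈ B : there do not exist distinct points w₁, w₂ ∈ (A ∪ B) \ {x} such that x, w₁, w₂ are collinear}. Then for every v ∈ Ω, the probability of the event [v ∈ B, or there exist distinct points w₁, w₂ ∈ A ∪ M(B), both different from v, such that v, w₁, w₂ are collinear] is at least p · min_{u∈Ω} |A_S(u)| − 2p² · (max_{u∈Ω} |A_S(u)|)² − p³ · max_{u∈Ω} |A_S(u)| · max_{u∈Ω} |T_S(u)|. -/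

import Mathlib

open Projectivization MeasureTheory

/-- Three points of a projective space are collinear if their representative vectors span a
linear subspace of dimension at most `2`. -/
def Collin3 {F : Type*} [Field F] {V : Type*} [AddCommGroup V] [Module F V]
    (x y z : Projectivization F V) : Prop :=
  Module.finrank F ↥(x.submodule ⊔ y.submodule ⊔ z.submodule) ≤ 2

/-- A cap is a set of points no three of which are pairwise distinct and collinear. -/
def IsCap {F : Type*} [Field F] {V : Type*} [AddCommGroup V] [Module F V]
    (A : Set (Projectivization F V)) : Prop :=
  ∀ x ∈ A, ∀ y ∈ A, ∀ z ∈ A, x ≠ y → x ≠ z → y ≠ z → ¬ Collin3 x y z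

/-- The Bernoulli measure with parameter `p` on `Bool` (for `p ∈ [0,1]`). -/
noncomputable def bernoulliMeasure (p : ℝ) : Measure Bool :=
  (PMF.bernoulli (min (Real.toNNReal p) 1) (min_le_right _ _)).toMeasure

/-- The law of a `p`-random subset of the finite set `S`: every element of `S` is included
independently with probability `p`. -/
noncomputable def nibbleMeasure {α : Type*} (S : Finset α) (p : ℝ) :
    Measure (↥S → Bool) :=
  Measure.pi fun _ => bernoulliMeasure p

/-- The random subset of `S` corresponding to the sample `ω`. -/
def chosenSet {α : Type*} (S : Finset α) (ω : ↥S → Bool) : Set α :=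
  {x | ∃ h : x ∈ S, ω ⟨x, h⟩ = true}

/-- `A_S(v)`: the points of `S \ {v}` collinear with `v` and some point of `A`. -/
def capCone {F : Type*} [Field F] {V : Type*} [AddCommGroup V] [Module F V]
    (A : Set (Projectivization F V)) (S : Finset (Projectivization F V))
    (v : Projectivization F V) : Set (Projectivization F V) :=
  {x | x ∈ S ∧ x ≠ v ∧ ∃ u ∈ A, v ≠ x ∧ v ≠ u ∧ x ≠ u ∧ Collin3 v x u}

/-- `T_S(v)`: the unordered pairs of distinct points of `S \ {v}` collinear with `v`. -/
def pairCone {F : Type*} [Field F] {V : Type*} [AddCommGroup V] [Module F V]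
    (S : Finset (Projectivization F V)) (v : Projectivization F V) :
    Set (Sym2 (Projectivization F V)) :=
  {s | ∃ x y, s = s(x, y) ∧ x ≠ y ∧ x ∈ S ∧ x ≠ v ∧ y ∈ S ∧ y ≠ v ∧ Collin3 v x y}

/-- `M(B)`: the points of `B` lying on no bisecant of `A ∪ B`. -/
def goodSubset {F : Type*} [Field F] {V : Type*} [AddCommGroup V] [Module F V]
    (A B : Set (Projectivization F V)) : Set (Projectivization F V) :=
  {x ∈ B | ¬ ∃ w₁ w₂, w₁ ∈ (A ∪ B) \ {x} ∧ w₂ ∈ (A ∪ B) \ {x} ∧ w₁ ≠ w₂ ∧ Collin3 x w₁ w₂}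

open scoped ENNReal

/-! ### Auxiliary lemmas -/

instance (p : ℝ) : IsProbabilityMeasure (bernoulliMeasure p) :=
  PMF.toMeasure.isProbabilityMeasure _

theorem aux_measurable {α : Type*} (S : Finset α) (E : Set (↥S → Bool)) : MeasurableSet E := by
  have h1 : ∀ ω : ↥S → Bool, MeasurableSet ({ω} : Set (↥S → Bool)) := by
    intro ω
    have : ({ω} : Set (↥S → Bool)) = Set.univ.pi (fun i => {ω i}) := by
      ext f; simp [funext_iff, Set.mem_pi, eq_comm]
    rw [this]
    exact MeasurableSet.univ_pi fun i => measurableSet_singleton _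
  have : E = ⋃ ω ∈ E, {ω} := by simp
  rw [this]
  exact MeasurableSet.biUnion (Set.to_countable _) fun ω _ => h1 ω

theorem meas_all_true {α : Type*} (S : Finset α) (p : ℝ) (hp1 : p ≤ 1) (t : Finset ↥S) :
    nibbleMeasure S p {ω | ∀ i ∈ t, ω i = true} = (ENNReal.ofReal p) ^ t.card := by
  classical
  have hb : bernoulliMeasure p {true} = ENNReal.ofReal p := by
    rw [bernoulliMeasure, PMF.toMeasure_apply_singleton _ _ (measurableSet_singleton _),
      PMF.bernoulli_apply]
    simp [min_eq_left (Real.toNNReal_le_one.2 hp1), ENNReal.ofReal]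
  have hset : {ω : ↥S → Bool | ∀ i ∈ t, ω i = true} =
      Set.univ.pi (fun i => if i ∈ t then {true} else Set.univ) := by
    ext ω; simp only [Set.mem_pi, Set.mem_univ, forall_true_left, Set.mem_setOf_eq]
    constructor
    · intro h i; by_cases hi : i ∈ t <;> simp [hi, h i]
    · intro h i hi; have := h i; simpa [hi] using this
  rw [nibbleMeasure, hset, Measure.pi_pi]
  rw [← Finset.prod_filter_mul_prod_filter_not Finset.univ (· ∈ t)]
  have h1 : ∀ i ∈ Finset.univ.filter (· ∈ t),
      bernoulliMeasure p (if i ∈ t then {true} else Set.univ) = ENNReal.ofReal p := by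
    intro i hi; simp only [Finset.mem_filter] at hi; rw [if_pos hi.2, hb]
  have h2 : ∀ i ∈ Finset.univ.filter (¬ · ∈ t),
      bernoulliMeasure p (if i ∈ t then {true} else Set.univ) = 1 := by
    intro i hi; simp only [Finset.mem_filter] at hi; rw [if_neg hi.2]; exact measure_univ
  rw [Finset.prod_congr rfl h1, Finset.prod_congr rfl h2, Finset.prod_const,
    Finset.prod_const_one, mul_one, Finset.filter_univ_mem]

theorem bonferroni {α X : Type*} [DecidableEq α] [MeasurableSpace X]
    (hms : ∀ E : Set X, MeasurableSet E)
    (μ : Measure X) (C : Finset α) (E : α → Set X) :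
    ∑ x ∈ C, μ (E x) ≤ μ (⋃ x ∈ C, E x) +
      ∑ q ∈ C.offDiag, μ (E q.1 ∩ E q.2) := by
  classical
  induction C using Finset.induction with
  | empty => simp
  | @insert a t ha ih =>
    rw [Finset.sum_insert ha]
    have key : μ (E a) + μ (⋃ x ∈ t, E x) ≤
        μ (⋃ x ∈ insert a t, E x) + ∑ x ∈ t, μ (E a ∩ E x) := by
      have h1 : μ (E a) + μ (⋃ x ∈ t, E x) =
          μ (E a ∪ ⋃ x ∈ t, E x) + μ (E a ∩ ⋃ x ∈ t, E x) :=
        (measure_union_add_inter _ (hms _)).symm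
      have h2 : μ (E a ∩ ⋃ x ∈ t, E x) ≤ ∑ x ∈ t, μ (E a ∩ E x) := by
        rw [Set.inter_iUnion₂]
        exact measure_biUnion_finset_le t _
      rw [h1, Finset.set_biUnion_insert]
      exact add_le_add le_rfl h2
    calc μ (E a) + ∑ x ∈ t, μ (E x)
        ≤ μ (E a) + (μ (⋃ x ∈ t, E x) + ∑ q ∈ t.offDiag, μ (E q.1 ∩ E q.2)) :=
          add_le_add le_rfl ih
      _ = (μ (E a) + μ (⋃ x ∈ t, E x)) + ∑ q ∈ t.offDiag, μ (E q.1 ∩ E q.2) := by ring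
      _ ≤ (μ (⋃ x ∈ insert a t, E x) + ∑ x ∈ t, μ (E a ∩ E x))
            + ∑ q ∈ t.offDiag, μ (E q.1 ∩ E q.2) := add_le_add key le_rfl
      _ ≤ μ (⋃ x ∈ insert a t, E x) + ∑ q ∈ (insert a t).offDiag, μ (E q.1 ∩ E q.2) := by
          rw [add_assoc]
          refine add_le_add le_rfl ?_
          have hsub : t.offDiag ∪ ({a} ×ˢ t) ⊆ (insert a t).offDiag := by
            intro q hq
            rw [Finset.mem_union] at hq
            rcases hq with hq | hq
            · rw [Finset.mem_offDiag] at hq ⊢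
              exact ⟨Finset.mem_insert_of_mem hq.1, Finset.mem_insert_of_mem hq.2.1, hq.2.2⟩
            · rw [Finset.mem_product, Finset.mem_singleton] at hq
              obtain ⟨q1, q2⟩ := q
              obtain ⟨rfl, hq2⟩ : q1 = a ∧ q2 ∈ t := hq
              rw [Finset.mem_offDiag]
              exact ⟨Finset.mem_insert_self q1 t, Finset.mem_insert_of_mem hq2,
                fun h => ha (by rw [show q1 = q2 from h]; exact hq2)⟩
          have hdisj : Disjoint t.offDiag ({a} ×ˢ t) := by
            rw [Finset.disjoint_left]
            rintro ⟨q1, q2⟩ hq hq'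
            rw [Finset.mem_product, Finset.mem_singleton] at hq'
            rw [Finset.mem_offDiag] at hq
            obtain ⟨rfl, _⟩ := hq'
            exact ha hq.1
          calc ∑ x ∈ t, μ (E a ∩ E x) + ∑ q ∈ t.offDiag, μ (E q.1 ∩ E q.2)
              = ∑ q ∈ t.offDiag ∪ ({a} ×ˢ t), μ (E q.1 ∩ E q.2) := by
                rw [Finset.sum_union hdisj, Finset.sum_product, Finset.sum_singleton, add_comm]
            _ ≤ _ := Finset.sum_le_sum_of_subset hsub

theorem chosen_iff {α : Type*} {S : Finset α} {x : α} (hx : x ∈ S) (ω : ↥S → Bool) :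
    x ∈ chosenSet S ω ↔ ω ⟨x, hx⟩ = true :=
  ⟨fun ⟨_, e⟩ => e, fun e => ⟨hx, e⟩⟩

theorem Collin3.swap23 {F : Type*} [Field F] {V : Type*} [AddCommGroup V] [Module F V]
    {x y z : Projectivization F V} (h : Collin3 x y z) : Collin3 x z y := by
  rw [Collin3, sup_right_comm]; exact h

/-- Lower bound for the probability that a point `v ∈ Ω` either is chosen in the nibble `B` or
lies on a bisecant of `A ∪ M(B)`. -/
theorem deletion_probability_lower_bound
    (F : Type) [Field F] [Fintype F] (N : ℕ) (hN : 3 ≤ N)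
    (A : Finset (Projectivization F (Fin (N + 1) → F)))
    (hA : IsCap (A : Set (Projectivization F (Fin (N + 1) → F))))
    (Ω : Set (Projectivization F (Fin (N + 1) → F)))
    (hΩ : Ω = {u | u ∉ A ∧ ∀ w₁ ∈ A, ∀ w₂ ∈ A, w₁ ≠ w₂ → ¬ Collin3 u w₁ w₂})
    (S : Finset (Projectivization F (Fin (N + 1) → F)))
    (hSΩ : (S : Set (Projectivization F (Fin (N + 1) → F))) ⊆ Ω)
    (p : ℝ) (hp0 : 0 ≤ p) (hp1 : p ≤ 1)
    (v : Projectivization F (Fin (N + 1) → F)) (hv : v ∈ Ω) :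
    nibbleMeasure S p
      {ω | v ∈ chosenSet S ω ∨
        ∃ w₁ w₂,
          (w₁ ∈ (A : Set _) ∪ goodSubset (A : Set _) (chosenSet S ω)) ∧
          (w₂ ∈ (A : Set _) ∪ goodSubset (A : Set _) (chosenSet S ω)) ∧
          w₁ ≠ w₂ ∧ w₁ ≠ v ∧ w₂ ≠ v ∧ Collin3 v w₁ w₂} ≥
    ENNReal.ofReal
      (p * ((sInf {n : ℕ | ∃ u ∈ Ω, n = (capCone (A : Set _) S u).ncard} : ℕ) : ℝ) -
        2 * p ^ 2 * ((sSup {n : ℕ | ∃ u ∈ Ω, n = (capCone (A : Set _) S u).ncard} : ℕ) : ℝ) ^ 2 -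
        p ^ 3 * ((sSup {n : ℕ | ∃ u ∈ Ω, n = (capCone (A : Set _) S u).ncard} : ℕ) : ℝ) *
          ((sSup {n : ℕ | ∃ u ∈ Ω, n = (pairCone S u).ncard} : ℕ) : ℝ)) := by
  classical
  set μ := nibbleMeasure S p with hμ
  set P := ENNReal.ofReal p with hP
  set iN : ℕ := sInf {n : ℕ | ∃ u ∈ Ω, n = (capCone (A : Set _) S u).ncard} with hiN
  set aN : ℕ := sSup {n : ℕ | ∃ u ∈ Ω, n = (capCone (A : Set _) S u).ncard} with haN
  set tN : ℕ := sSup {n : ℕ | ∃ u ∈ Ω, n = (pairCone S u).ncard} with htN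
  set Event : Set (↥S → Bool) :=
    {ω | v ∈ chosenSet S ω ∨
        ∃ w₁ w₂,
          (w₁ ∈ (A : Set _) ∪ goodSubset (A : Set _) (chosenSet S ω)) ∧
          (w₂ ∈ (A : Set _) ∪ goodSubset (A : Set _) (chosenSet S ω)) ∧
          w₁ ≠ w₂ ∧ w₁ ≠ v ∧ w₂ ≠ v ∧ Collin3 v w₁ w₂} with hEvent
  -- finiteness of the cones
  have capSub : ∀ u : Projectivization F (Fin (N + 1) → F), capCone (A : Set _) S u ⊆ ↑S := fun u x hx => hx.1
  have Cfin : ∀ u : Projectivization F (Fin (N + 1) → F), (capCone (A : Set _) S u).Finite :=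
    fun u => S.finite_toSet.subset (capSub u)
  have Tfin : ∀ u : Projectivization F (Fin (N + 1) → F), (pairCone S u).Finite := by
    intro u
    refine ((S.finite_toSet.prod S.finite_toSet).image (fun q => s(q.1, q.2))).subset ?_
    rintro s ⟨x, y, rfl, hxy, hxS, _, hyS, _⟩
    exact ⟨(x, y), ⟨hxS, hyS⟩, rfl⟩
  -- boundedness of the index sets
  have hbddA : BddAbove {n : ℕ | ∃ u ∈ Ω, n = (capCone (A : Set _) S u).ncard} := by
    refine ⟨S.card, ?_⟩
    rintro n ⟨u, hu, rfl⟩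
    calc (capCone (A : Set _) S u).ncard ≤ (↑S : Set (Projectivization F (Fin (N + 1) → F))).ncard :=
          Set.ncard_le_ncard (capSub u) S.finite_toSet
      _ = S.card := Set.ncard_coe_finset S
  have hbddT : BddAbove {n : ℕ | ∃ u ∈ Ω, n = (pairCone S u).ncard} := by
    refine ⟨((fun q : Projectivization F (Fin (N + 1) → F) × Projectivization F (Fin (N + 1) → F) => s(q.1, q.2)) '' (↑S ×ˢ ↑S)).ncard, ?_⟩
    rintro n ⟨u, hu, rfl⟩
    refine Set.ncard_le_ncard ?_ ((S.finite_toSet.prod S.finite_toSet).image _)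
    rintro s ⟨x, y, rfl, hxy, hxS, _, hyS, _⟩
    exact ⟨(x, y), ⟨hxS, hyS⟩, rfl⟩
  have hA_le : ∀ u ∈ Ω, (capCone (A : Set _) S u).ncard ≤ aN :=
    fun u hu => le_csSup hbddA ⟨u, hu, rfl⟩
  have hT_le : ∀ u ∈ Ω, (pairCone S u).ncard ≤ tN :=
    fun u hu => le_csSup hbddT ⟨u, hu, rfl⟩
  have hiN_le : iN ≤ (capCone (A : Set _) S v).ncard := Nat.sInf_le ⟨v, hv, rfl⟩
  -- the events
  set C : Finset (Projectivization F (Fin (N + 1) → F)) := (Cfin v).toFinset with hC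
  have hCcard : C.card = (capCone (A : Set _) S v).ncard :=
    (Set.ncard_eq_toFinset_card _ (Cfin v)).symm
  set Ev : Projectivization F (Fin (N + 1) → F) → Set (↥S → Bool) :=
    fun x => {ω | x ∈ goodSubset (A : Set _) (chosenSet S ω)} with hEv
  -- membership facts for elements of C
  have hCmem : ∀ x ∈ C, x ∈ capCone (A : Set _) S v := fun x hx => (Cfin v).mem_toFinset.1 hx
  have hCS : ∀ x ∈ C, x ∈ S := fun x hx => (hCmem x hx).1
  -- basic measure computations
  have meas_single : ∀ (x : Projectivization F (Fin (N + 1) → F)) (hx : x ∈ S), μ {ω | x ∈ chosenSet S ω} = P := by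
    intro x hx
    have : {ω : ↥S → Bool | x ∈ chosenSet S ω} =
        {ω | ∀ i ∈ ({⟨x, hx⟩} : Finset ↥S), ω i = true} := by
      ext ω; simp [chosen_iff hx]
    rw [this, hμ, meas_all_true S p hp1]
    simp [hP]
  have meas_pair : ∀ (x y : Projectivization F (Fin (N + 1) → F)) (hx : x ∈ S) (hy : y ∈ S), x ≠ y →
      μ {ω | x ∈ chosenSet S ω ∧ y ∈ chosenSet S ω} = P ^ 2 := by
    intro x y hx hy hxy
    have : {ω : ↥S → Bool | x ∈ chosenSet S ω ∧ y ∈ chosenSet S ω} =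
        {ω | ∀ i ∈ ({⟨x, hx⟩, ⟨y, hy⟩} : Finset ↥S), ω i = true} := by
      ext ω; simp [chosen_iff hx, chosen_iff hy, and_comm]
    rw [this, hμ, meas_all_true S p hp1]
    rw [Finset.card_insert_of_notMem (by simp [hxy]), Finset.card_singleton]
  have meas_triple : ∀ (x y z : Projectivization F (Fin (N + 1) → F)) (hx : x ∈ S) (hy : y ∈ S) (hz : z ∈ S),
      x ≠ y → x ≠ z → y ≠ z →
      μ {ω | x ∈ chosenSet S ω ∧ y ∈ chosenSet S ω ∧ z ∈ chosenSet S ω} = P ^ 3 := by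
    intro x y z hx hy hz hxy hxz hyz
    have : {ω : ↥S → Bool | x ∈ chosenSet S ω ∧ y ∈ chosenSet S ω ∧ z ∈ chosenSet S ω} =
        {ω | ∀ i ∈ ({⟨x, hx⟩, ⟨y, hy⟩, ⟨z, hz⟩} : Finset ↥S), ω i = true} := by
      ext ω
      constructor
      · rintro ⟨h1, h2, h3⟩ i hi
        simp only [Finset.mem_insert, Finset.mem_singleton] at hi
        rcases hi with rfl | rfl | rfl
        · exact (chosen_iff hx ω).1 h1
        · exact (chosen_iff hy ω).1 h2
        · exact (chosen_iff hz ω).1 h3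
      · intro h
        exact ⟨(chosen_iff hx ω).2 (h _ (by simp)), (chosen_iff hy ω).2 (h _ (by simp)),
          (chosen_iff hz ω).2 (h _ (by simp))⟩
    rw [this, hμ, meas_all_true S p hp1]
    have : ({⟨x, hx⟩, ⟨y, hy⟩, ⟨z, hz⟩} : Finset ↥S).card = 3 := by
      rw [Finset.card_insert_of_notMem (by simp [hxy, hxz]),
        Finset.card_insert_of_notMem (by simp [hyz]), Finset.card_singleton]
    rw [this]
  -- the union of events is contained in Event
  have hUnion : (⋃ x ∈ C, Ev x) ⊆ Event := by
    intro ω hω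
    simp only [Set.mem_iUnion] at hω
    obtain ⟨x, hxC, hxEv⟩ := hω
    obtain ⟨_, _, u, huA, hvx, hvu, hxu, hcol⟩ := hCmem x hxC
    right
    exact ⟨x, u, Or.inr hxEv, Or.inl huA, hxu, fun h => hvx h.symm, fun h => hvu h.symm, hcol⟩
  -- the deletion events
  set Del : Projectivization F (Fin (N + 1) → F) → Set (↥S → Bool) :=
    fun x => {ω | x ∈ chosenSet S ω ∧ x ∉ goodSubset (A : Set _) (chosenSet S ω)} with hDel
  -- cover of the deletion event
  have hDelCover : ∀ x ∈ C, μ (Del x) ≤ (aN : ℝ≥0∞) * P ^ 2 + (tN : ℝ≥0∞) * P ^ 3 := by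
    intro x hxC
    have hxS : x ∈ S := hCS x hxC
    have hxΩ : x ∈ Ω := hSΩ hxS
    have hxA : x ∉ ↑A ∧ ∀ w₁ ∈ A, ∀ w₂ ∈ A, w₁ ≠ w₂ → ¬ Collin3 x w₁ w₂ := by
      rw [hΩ] at hxΩ; exact hxΩ
    set Cx : Finset (Projectivization F (Fin (N + 1) → F)) := (Cfin x).toFinset
    set Tx : Finset (Sym2 (Projectivization F (Fin (N + 1) → F))) := (Tfin x).toFinset
    have hcover : Del x ⊆
        (⋃ w ∈ Cx, {ω | x ∈ chosenSet S ω ∧ w ∈ chosenSet S ω}) ∪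
        (⋃ s ∈ Tx, {ω | x ∈ chosenSet S ω ∧ ∀ y ∈ s, y ∈ chosenSet S ω}) := by
      rintro ω ⟨hxB, hxG⟩
      rw [goodSubset, Set.mem_setOf_eq, not_and] at hxG
      obtain ⟨w₁, w₂, ⟨hw₁AB, hw₁x⟩, ⟨hw₂AB, hw₂x⟩, hww, hcol⟩ := not_not.1 (hxG hxB)
      rw [Set.mem_singleton_iff] at hw₁x hw₂x
      have hBS : chosenSet S ω ⊆ ↑S := fun y ⟨h, _⟩ => h
      rcases hw₁AB with hw₁A | hw₁B
      · rcases hw₂AB with hw₂A | hw₂B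
        · exact absurd hcol (hxA.2 w₁ hw₁A w₂ hw₂A hww)
        · -- w₁ ∈ A, w₂ ∈ B: w₂ ∈ capCone A S x
          left
          refine Set.mem_iUnion₂.2 ⟨w₂, (Cfin x).mem_toFinset.2 ?_, ⟨hxB, hw₂B⟩⟩
          exact ⟨hBS hw₂B, hw₂x, w₁, hw₁A, fun h => hw₂x h.symm, fun h => hw₁x h.symm,
            fun h => hww h.symm, hcol.swap23⟩
      · rcases hw₂AB with hw₂A | hw₂B
        · -- w₁ ∈ B, w₂ ∈ A: w₁ ∈ capCone A S x
          left
          refine Set.mem_iUnion₂.2 ⟨w₁, (Cfin x).mem_toFinset.2 ?_, ⟨hxB, hw₁B⟩⟩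
          exact ⟨hBS hw₁B, hw₁x, w₂, hw₂A, fun h => hw₁x h.symm, fun h => hw₂x h.symm,
            hww, hcol⟩
        · -- both in B: pair in pairCone S x
          right
          refine Set.mem_iUnion₂.2 ⟨s(w₁, w₂), (Tfin x).mem_toFinset.2 ?_, ?_⟩
          · exact ⟨w₁, w₂, rfl, hww, hBS hw₁B, hw₁x, hBS hw₂B, hw₂x, hcol⟩
          · refine ⟨hxB, ?_⟩
            intro y hy
            rw [Sym2.mem_iff] at hy
            rcases hy with rfl | rfl
            · exact hw₁B
            · exact hw₂B
    calc μ (Del x) ≤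
        μ (⋃ w ∈ Cx, {ω | x ∈ chosenSet S ω ∧ w ∈ chosenSet S ω}) +
        μ (⋃ s ∈ Tx, {ω | x ∈ chosenSet S ω ∧ ∀ y ∈ s, y ∈ chosenSet S ω}) :=
          le_trans (measure_mono hcover) (measure_union_le _ _)
      _ ≤ (∑ w ∈ Cx, μ {ω | x ∈ chosenSet S ω ∧ w ∈ chosenSet S ω}) +
          (∑ s ∈ Tx, μ {ω | x ∈ chosenSet S ω ∧ ∀ y ∈ s, y ∈ chosenSet S ω}) :=
          add_le_add (measure_biUnion_finset_le _ _) (measure_biUnion_finset_le _ _)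
      _ ≤ (aN : ℝ≥0∞) * P ^ 2 + (tN : ℝ≥0∞) * P ^ 3 := by
          refine add_le_add ?_ ?_
          · have hterm : ∀ w ∈ Cx, μ {ω | x ∈ chosenSet S ω ∧ w ∈ chosenSet S ω} = P ^ 2 := by
              intro w hw
              obtain ⟨hwS, hwx, _⟩ := (Cfin x).mem_toFinset.1 hw
              exact meas_pair x w hxS hwS (fun h => hwx h.symm)
            rw [Finset.sum_congr rfl hterm, Finset.sum_const, nsmul_eq_mul]
            refine mul_le_mul' ?_ le_rfl
            have : Cx.card = (capCone (A : Set _) S x).ncard :=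
              (Set.ncard_eq_toFinset_card _ (Cfin x)).symm
            exact_mod_cast Nat.cast_le.2 (this ▸ hA_le x hxΩ)
          · have hterm : ∀ s ∈ Tx,
                μ {ω | x ∈ chosenSet S ω ∧ ∀ y ∈ s, y ∈ chosenSet S ω} = P ^ 3 := by
              intro s hs
              obtain ⟨y, z, rfl, hyz, hyS, hyx, hzS, hzx, _⟩ := (Tfin x).mem_toFinset.1 hs
              have : {ω : ↥S → Bool | x ∈ chosenSet S ω ∧ ∀ w ∈ s(y, z), w ∈ chosenSet S ω} =
                  {ω | x ∈ chosenSet S ω ∧ y ∈ chosenSet S ω ∧ z ∈ chosenSet S ω} := by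
                ext ω
                simp only [Set.mem_setOf_eq, Sym2.mem_iff]
                constructor
                · rintro ⟨h1, h2⟩
                  exact ⟨h1, h2 y (Or.inl rfl), h2 z (Or.inr rfl)⟩
                · rintro ⟨h1, h2, h3⟩
                  refine ⟨h1, ?_⟩
                  rintro w (rfl | rfl)
                  · exact h2
                  · exact h3
              rw [this]
              exact meas_triple x y z hxS hyS hzS (fun h => hyx h.symm) (fun h => hzx h.symm) hyz
            rw [Finset.sum_congr rfl hterm, Finset.sum_const, nsmul_eq_mul]
            refine mul_le_mul' ?_ le_rfl
            have : Tx.card = (pairCone S x).ncard :=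
              (Set.ncard_eq_toFinset_card _ (Tfin x)).symm
            exact_mod_cast Nat.cast_le.2 (this ▸ hT_le x hxΩ)
  -- master chain
  have master : P * (iN : ℝ≥0∞) ≤
      μ Event + 2 * P ^ 2 * (aN : ℝ≥0∞) ^ 2 + P ^ 3 * (aN : ℝ≥0∞) * (tN : ℝ≥0∞) := by
    have hCa : (C.card : ℝ≥0∞) ≤ (aN : ℝ≥0∞) := by
      exact_mod_cast Nat.cast_le.2 (hCcard ▸ hA_le v hv)
    calc P * (iN : ℝ≥0∞) ≤ P * (C.card : ℝ≥0∞) := by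
          refine mul_le_mul' le_rfl ?_
          exact_mod_cast Nat.cast_le.2 (hCcard ▸ hiN_le)
      _ = ∑ x ∈ C, μ {ω | x ∈ chosenSet S ω} := by
          rw [Finset.sum_congr rfl (fun x hx => meas_single x (hCS x hx)),
            Finset.sum_const, nsmul_eq_mul, mul_comm]
      _ ≤ ∑ x ∈ C, (μ (Ev x) + μ (Del x)) := by
          refine Finset.sum_le_sum fun x hx => ?_
          have hsub : {ω : ↥S → Bool | x ∈ chosenSet S ω} ⊆ Ev x ∪ Del x := by
            intro ω hω
            by_cases h : x ∈ goodSubset (A : Set _) (chosenSet S ω)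
            · exact Or.inl h
            · exact Or.inr ⟨hω, h⟩
          exact le_trans (measure_mono hsub) (measure_union_le _ _)
      _ = ∑ x ∈ C, μ (Ev x) + ∑ x ∈ C, μ (Del x) := Finset.sum_add_distrib
      _ ≤ (μ (⋃ x ∈ C, Ev x) + ∑ q ∈ C.offDiag, μ (Ev q.1 ∩ Ev q.2)) + ∑ x ∈ C, μ (Del x) :=
          add_le_add (bonferroni (aux_measurable S) μ C Ev) le_rfl
      _ ≤ (μ Event + (aN : ℝ≥0∞) ^ 2 * P ^ 2) +
          ((aN : ℝ≥0∞) * ((aN : ℝ≥0∞) * P ^ 2 + (tN : ℝ≥0∞) * P ^ 3)) := by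
          refine add_le_add (add_le_add (measure_mono hUnion) ?_) ?_
          · -- pairs bound
            have hterm : ∀ q ∈ C.offDiag, μ (Ev q.1 ∩ Ev q.2) ≤ P ^ 2 := by
              rintro ⟨x, y⟩ hq
              rw [Finset.mem_offDiag] at hq
              obtain ⟨hx, hy, hxy⟩ := hq
              have hsub : Ev x ∩ Ev y ⊆
                  {ω | x ∈ chosenSet S ω ∧ y ∈ chosenSet S ω} :=
                fun ω ⟨h1, h2⟩ => ⟨h1.1, h2.1⟩
              calc μ (Ev x ∩ Ev y) ≤ μ {ω | x ∈ chosenSet S ω ∧ y ∈ chosenSet S ω} :=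
                    measure_mono hsub
                _ = P ^ 2 := meas_pair x y (hCS x hx) (hCS y hy) hxy
            calc ∑ q ∈ C.offDiag, μ (Ev q.1 ∩ Ev q.2) ≤ ∑ _q ∈ C.offDiag, P ^ 2 :=
                  Finset.sum_le_sum hterm
              _ = (C.offDiag.card : ℝ≥0∞) * P ^ 2 := by rw [Finset.sum_const, nsmul_eq_mul]
              _ ≤ (aN : ℝ≥0∞) ^ 2 * P ^ 2 := by
                  refine mul_le_mul' ?_ le_rfl
                  have h1 : C.offDiag.card ≤ C.card * C.card := by
                    rw [Finset.offDiag_card]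
                    exact Nat.sub_le _ _
                  calc (C.offDiag.card : ℝ≥0∞) ≤ ((C.card * C.card : ℕ) : ℝ≥0∞) := by
                        exact_mod_cast Nat.cast_le.2 h1
                    _ = (C.card : ℝ≥0∞) * (C.card : ℝ≥0∞) := by push_cast; ring
                    _ ≤ (aN : ℝ≥0∞) * (aN : ℝ≥0∞) := mul_le_mul' hCa hCa
                    _ = (aN : ℝ≥0∞) ^ 2 := (sq _).symm
          · -- deletion bound
            calc ∑ x ∈ C, μ (Del x) ≤
                ∑ _x ∈ C, ((aN : ℝ≥0∞) * P ^ 2 + (tN : ℝ≥0∞) * P ^ 3) :=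
                  Finset.sum_le_sum hDelCover
              _ = (C.card : ℝ≥0∞) * ((aN : ℝ≥0∞) * P ^ 2 + (tN : ℝ≥0∞) * P ^ 3) := by
                  rw [Finset.sum_const, nsmul_eq_mul]
              _ ≤ (aN : ℝ≥0∞) * ((aN : ℝ≥0∞) * P ^ 2 + (tN : ℝ≥0∞) * P ^ 3) :=
                  mul_le_mul' hCa le_rfl
      _ = μ Event + 2 * P ^ 2 * (aN : ℝ≥0∞) ^ 2 + P ^ 3 * (aN : ℝ≥0∞) * (tN : ℝ≥0∞) := by
          ring
  -- convert the goal
  rw [ge_iff_le, show (2 : ℝ) * p ^ 2 * ((aN : ℕ) : ℝ) ^ 2 = 2 * p ^ 2 * (aN : ℝ) ^ 2 from rfl]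
  have hy0 : (0 : ℝ) ≤ 2 * p ^ 2 * (aN : ℝ) ^ 2 := by positivity
  have hz0 : (0 : ℝ) ≤ p ^ 3 * (aN : ℝ) * (tN : ℝ) := by positivity
  rw [ENNReal.ofReal_sub _ hz0, ENNReal.ofReal_sub _ hy0]
  rw [tsub_le_iff_right, tsub_le_iff_right]
  have e1 : ENNReal.ofReal (p * (iN : ℝ)) = P * (iN : ℝ≥0∞) := by
    rw [ENNReal.ofReal_mul hp0, ENNReal.ofReal_natCast]
  have e2 : ENNReal.ofReal (2 * p ^ 2 * (aN : ℝ) ^ 2) = 2 * P ^ 2 * (aN : ℝ≥0∞) ^ 2 := by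
    rw [ENNReal.ofReal_mul (by positivity), ENNReal.ofReal_mul (by norm_num),
      ENNReal.ofReal_pow hp0, ENNReal.ofReal_pow (by positivity), ENNReal.ofReal_natCast,
      ENNReal.ofReal_ofNat]
  have e3 : ENNReal.ofReal (p ^ 3 * (aN : ℝ) * (tN : ℝ)) = P ^ 3 * (aN : ℝ≥0∞) * (tN : ℝ≥0∞) := by
    rw [ENNReal.ofReal_mul (by positivity), ENNReal.ofReal_mul (by positivity),
      ENNReal.ofReal_pow hp0, ENNReal.ofReal_natCast, ENNReal.ofReal_natCast]
  rw [e1, e2, e3]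
  calc P * (iN : ℝ≥0∞) ≤
      μ Event + 2 * P ^ 2 * (aN : ℝ≥0∞) ^ 2 + P ^ 3 * (aN : ℝ≥0∞) * (tN : ℝ≥0∞) := master
    _ = μ Event + P ^ 3 * (aN : ℝ≥0∞) * (tN : ℝ≥0∞) + 2 * P ^ 2 * (aN : ℝ≥0∞) ^ 2 := by ring
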